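/- arXiv:2103.10340 — 3 statements merged into one kernel-verified Lean document; each statement's English description precedes it below -/
import Mathlib

section
/- Assume GCH and let κ ≥ ω₂ be a cardinal. Then every hypergraph 𝓐 ⊆ [κ]^κ (i.e., every edge is a subset of κ of cardinality κ) possessing property C(2,ω) has cardinality at most κ and has a maximizing well-ordering. -/
open Cardinal Set

universe u

/-- `𝓔` possesses property C(k,ρ): every `k`-element subfamily of `𝓔` has
intersection of cardinality `< ρ`. -/
def HasPropC {α : Type u} (𝓔 : Set (Set α)) (k : ℕ) (ρ : Cardinal.{u}) : Prop :=
  ∀ 𝓔' : Finset (Set α), ↑𝓔' ⊆ 𝓔 → 𝓔'.card = k →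
    #(⋂₀ (𝓔' : Set (Set α)) : Set α) < ρ

/-- `Y` is a vertex cover of the hypergraph `𝓔`. -/
def IsVC {α : Type u} (𝓔 : Set (Set α)) (Y : Set α) : Prop :=
  Y ⊆ ⋃₀ 𝓔 ∧ ∀ E ∈ 𝓔, (Y ∩ E).Nonempty

/-- `Y` is a minimal vertex cover of `𝓔`: a vertex cover no proper subset of
which is a vertex cover. -/
def IsMinVC {α : Type u} (𝓔 : Set (Set α)) (Y : Set α) : Prop :=
  IsVC 𝓔 Y ∧ ∀ Z, Z ⊂ Y → ¬ IsVC 𝓔 Z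

/-- `𝓔` has a minimal vertex cover. -/
def HasMinVC {α : Type u} (𝓔 : Set (Set α)) : Prop := ∃ Y, IsMinVC 𝓔 Y

/-- `𝓔` has a maximizing well-ordering: a well-ordering of `⋃₀ 𝓔` in which
every edge has a maximal element. -/
def HasMaxWO {α : Type u} (𝓔 : Set (Set α)) : Prop :=
  ∃ r : (⋃₀ 𝓔 : Set α) → (⋃₀ 𝓔 : Set α) → Prop, IsWellOrder _ r ∧
    ∀ E ∈ 𝓔, ∃ m : (⋃₀ 𝓔 : Set α), (m : α) ∈ E ∧
      ∀ x : (⋃₀ 𝓔 : Set α), (x : α) ∈ E → ¬ r m x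

/-- `𝓑` is a shrink of `𝓐` (`𝓑 ≪ 𝓐`). -/
def IsShrink {α : Type u} (𝓑 𝓐 : Set (Set α)) : Prop :=
  ∀ B ∈ 𝓑, ∃ A ∈ 𝓐, B ⊆ A ∧ #(A \ B : Set α) < #A

/-- `G` (restricted to the ordinals below `cf(|⋃₀ 𝓐|)`) is a good cut of `𝓐`:
an increasing continuous sequence of subsets of `⋃₀ 𝓐` of cardinality `< |⋃₀ 𝓐|`,
starting at `∅`, with union `⋃₀ 𝓐`, such that every `A ∈ 𝓐` is contained in some
`G (β+1)` with `|G β ∩ A| < |A|`. -/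
def IsGoodCut {α : Type u} (𝓐 : Set (Set α)) (G : Ordinal.{u} → Set α) : Prop :=
  (∀ β γ : Ordinal.{u}, β ≤ γ → γ < (#(⋃₀ 𝓐 : Set α)).ord.cof.ord → G β ⊆ G γ) ∧
  G 0 = ∅ ∧
  (∀ β < (#(⋃₀ 𝓐 : Set α)).ord.cof.ord, Order.IsSuccLimit β → G β = ⋃ γ ∈ Set.Iio β, G γ) ∧
  (∀ β < (#(⋃₀ 𝓐 : Set α)).ord.cof.ord,
    #(G β) < #(⋃₀ 𝓐 : Set α) ∧ G β ⊆ ⋃₀ 𝓐) ∧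
  (⋃ β ∈ Set.Iio (#(⋃₀ 𝓐 : Set α)).ord.cof.ord, G β) = ⋃₀ 𝓐 ∧
  (∀ A ∈ 𝓐, ∃ β < (#(⋃₀ 𝓐 : Set α)).ord.cof.ord,
    A ⊆ G (β + 1) ∧ #(G β ∩ A : Set α) < #A)

lemma exists_infinite_inter_aux {α : Type u} {κ : Cardinal.{u}}
    (hκ : Cardinal.aleph 2 ≤ κ) (e : α ≃ κ.ord.ToType) {A : Set α} (hA : #A = κ) :
    ∃ i : κ.ord.ToType, (A ∩ {x | e x < i}).Infinite := by
  classical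
  haveI : IsWellOrder κ.ord.ToType (· < ·) := isWellOrder_lt
  have haleph0 : ℵ₀ ≤ κ := le_trans (by simpa using Cardinal.aleph0_le_aleph 2) hκ
  have hlim : Order.IsSuccLimit κ.ord := Cardinal.isSuccLimit_ord haleph0
  have h1 : Cardinal.aleph 1 ≤ #A := by
    rw [hA]; exact le_trans (Cardinal.aleph_le_aleph.mpr one_le_two) hκ
  obtain ⟨T, hTA, hT⟩ := Cardinal.le_mk_iff_exists_subset.mp h1
  by_cases hcof : ℵ₀ < κ.ord.cof
  · -- big cofinality: a countable subset of T is bounded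
    obtain ⟨T₀, hT₀T, hT₀⟩ := Cardinal.le_mk_iff_exists_subset.mp
      (show ℵ₀ ≤ #(T : Set α) by rw [hT]; exact Cardinal.aleph0_le_aleph 1)
    set f : T₀ → Ordinal.{u} := fun t => Order.succ (Ordinal.typein (α := κ.ord.ToType) (· < ·) (e t.1)) with hf
    have hflt : ∀ t, f t < κ.ord := fun t => hlim.succ_lt (Ordinal.typein_lt_self _)
    have hsup : (⨆ t, f t) < κ.ord := by
      apply Ordinal.iSup_lt_ord _ hflt
      rwa [hT₀]
    set i : κ.ord.ToType := Ordinal.enum (· < ·) ⟨⨆ t, f t, by rw [Set.mem_Iio, Ordinal.type_toType]; exact hsup⟩ with hi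
    have hsub : T₀ ⊆ A ∩ {x | e x < i} := by
      intro t ht
      refine ⟨hTA (hT₀T ht), ?_⟩
      show e t < i
      rw [← Ordinal.typein_lt_typein (α := κ.ord.ToType) (· < ·), hi]
      erw [Ordinal.typein_enum]
      exact lt_of_lt_of_le (Order.lt_succ _) (Ordinal.le_iSup f ⟨t, ht⟩)
    have hinf : T₀.Infinite := by
      rw [← Set.infinite_coe_iff, Cardinal.infinite_iff, hT₀]
    exact ⟨i, hinf.mono hsub⟩
  · -- countable cofinality
    push_neg at hcof
    obtain ⟨S, hSu, hScard⟩ := Order.exists_cof_eq κ.ord.ToType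
    rw [Ordinal.cof_toType] at hScard
    have hScnt : S.Countable := by
      rw [← Set.countable_coe_iff, ← Cardinal.mk_le_aleph0_iff, hScard]; exact hcof
    have hpiece : ∃ s ∈ S, ¬ ({t ∈ T | e t ≤ s}).Countable := by
      by_contra hall
      push_neg at hall
      have hTsub : T ⊆ ⋃ s ∈ S, {t ∈ T | e t ≤ s} := by
        intro t ht
        obtain ⟨s, hsS, hts⟩ := hSu (e t)
        exact Set.mem_biUnion hsS ⟨ht, hts⟩
      have : T.Countable := Set.Countable.mono hTsub (Set.Countable.biUnion hScnt hall)
      rw [← Set.countable_coe_iff, ← Cardinal.mk_le_aleph0_iff, hT] at this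
      exact absurd this (not_le.mpr (by simpa using Cardinal.aleph_lt_aleph.mpr (zero_lt_one)))
    obtain ⟨s, hsS, hsnc⟩ := hpiece
    haveI : NoMaxOrder κ.ord.ToType := Cardinal.noMaxOrder haleph0
    obtain ⟨i, hi⟩ := exists_gt s
    have hsub : {t ∈ T | e t ≤ s} ⊆ A ∩ {x | e x < i} := by
      rintro t ⟨htT, hts⟩
      exact ⟨hTA htT, lt_of_le_of_lt hts hi⟩
    have hinf : ({t ∈ T | e t ≤ s}).Infinite := by
      intro hfin
      exact hsnc hfin.countable
    exact ⟨i, hinf.mono hsub⟩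

lemma mk_le_kappa_aux {α : Type u}
    (hGCH : ∀ μ : Cardinal.{u}, ℵ₀ ≤ μ → 2 ^ μ = Order.succ μ)
    (κ : Cardinal.{u}) (hκ : Cardinal.aleph 2 ≤ κ) (hα : #α = κ)
    (𝓐 : Set (Set α)) (hspec : ∀ A ∈ 𝓐, #A = κ)
    (hfin : ∀ A ∈ 𝓐, ∀ B ∈ 𝓐, A ≠ B → (A ∩ B).Finite) : #𝓐 ≤ κ := by
  classical
  haveI : IsWellOrder κ.ord.ToType (· < ·) := isWellOrder_lt
  have haleph0 : ℵ₀ ≤ κ := le_trans (by simpa using Cardinal.aleph0_le_aleph 2) hκ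
  obtain ⟨e⟩ : Nonempty (α ≃ κ.ord.ToType) :=
    Cardinal.eq.mp (by rw [Cardinal.mk_toType, Cardinal.card_ord, hα])
  set M : κ.ord.ToType → Set α := fun i => {x | e x < i} with hMdef
  have hM : ∀ i, #(M i) < κ := by
    intro i
    have h1 : #(M i) ≤ #{y : κ.ord.ToType // y < i} := by
      have : M i = e ⁻¹' (Set.Iio i) := rfl
      rw [this]
      exact Cardinal.mk_preimage_of_injective e (Set.Iio i) e.injective
    refine lt_of_le_of_lt h1 ?_
    calc #{y : κ.ord.ToType // y < i}
        = (Ordinal.typein (α := κ.ord.ToType) (· < ·) i).card := by rw [Ordinal.card_typein]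
      _ < κ := Cardinal.card_typein_toType_lt κ i
  set iA : 𝓐 → κ.ord.ToType := fun AA =>
    (exists_infinite_inter_aux hκ e (hspec _ AA.2)).choose with hiA
  have hiAspec : ∀ AA : 𝓐, ((AA : Set α) ∩ M (iA AA)).Infinite := fun AA =>
    (exists_infinite_inter_aux hκ e (hspec _ AA.2)).choose_spec
  set Φ : 𝓐 → Σ i : κ.ord.ToType, Set (M i) := fun AA =>
    ⟨iA AA, {x : M (iA AA) | (x : α) ∈ (AA : Set α)}⟩ with hΦ
  have hΦinj : Function.Injective Φ := by
    intro AA BB h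
    have hmem : ∀ x : α,
        (∃ hx : x ∈ M (Φ AA).1, ⟨x, hx⟩ ∈ (Φ AA).2) ↔
          ∃ hx : x ∈ M (Φ BB).1, ⟨x, hx⟩ ∈ (Φ BB).2 := by
      rw [h]
      exact fun x => Iff.rfl
    by_contra hne
    have hne' : (AA : Set α) ≠ (BB : Set α) := fun hh => hne (Subtype.ext hh)
    have hsub : (AA : Set α) ∩ M (iA AA) ⊆ (AA : Set α) ∩ (BB : Set α) := by
      rintro x ⟨hx1, hx2⟩
      obtain ⟨hy, hy2⟩ := (hmem x).mp ⟨hx2, hx1⟩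
      exact ⟨hx1, hy2⟩
    exact ((hiAspec AA).mono hsub) (hfin _ AA.2 _ BB.2 hne')
  calc #𝓐 ≤ #(Σ i : κ.ord.ToType, Set (M i)) := Cardinal.mk_le_of_injective hΦinj
    _ = Cardinal.sum (fun i => #(Set (M i))) := Cardinal.mk_sigma _
    _ ≤ Cardinal.sum (fun _ : κ.ord.ToType => κ) := by
        apply Cardinal.sum_le_sum
        intro i
        rw [Cardinal.mk_set]
        by_cases hinf : ℵ₀ ≤ #(M i)
        · rw [hGCH _ hinf]
          exact Order.succ_le_of_lt (hM i)
        · refine le_trans (le_of_lt (Cardinal.power_lt_aleph0 ?_ (not_le.mp hinf))) haleph0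
          simpa using Cardinal.nat_lt_aleph0 2
    _ = #(κ.ord.ToType) * κ := Cardinal.sum_const' _ _
    _ = κ * κ := by rw [Cardinal.mk_toType, Cardinal.card_ord]
    _ = κ := Cardinal.mul_eq_self haleph0

lemma hasMaxWO_aux {α : Type u} (κ : Cardinal.{u}) (haleph : ℵ₀ < κ)
    (𝓐 : Set (Set α)) (hspec : ∀ A ∈ 𝓐, #A = κ)
    (hfin : ∀ A ∈ 𝓐, ∀ B ∈ 𝓐, A ≠ B → (A ∩ B).Finite)
    (hcard : #𝓐 ≤ κ) : HasMaxWO 𝓐 := by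
  classical
  set o : Ordinal.{u} := (#𝓐).ord with ho
  haveI : IsWellOrder o.ToType (· < ·) := isWellOrder_lt
  obtain ⟨e⟩ : Nonempty (o.ToType ≃ 𝓐) := Cardinal.eq.mp (by rw [Cardinal.mk_toType, ho, Cardinal.card_ord])
  set A : o.ToType → Set α := fun ξ => (e ξ : Set α) with hA
  have hAmem : ∀ ξ, A ξ ∈ 𝓐 := fun ξ => (e ξ).2
  have hAne : ∀ ξ η : o.ToType, ξ ≠ η → A ξ ≠ A η := by
    intro ξ η hne heq
    exact hne (e.injective (Subtype.ext heq))
  have hIio : ∀ ξ : o.ToType, #{η : o.ToType // η < ξ} < κ := by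
    intro ξ
    calc #{η : o.ToType // η < ξ} = (Ordinal.typein (α := o.ToType) (· < ·) ξ).card := by
          rw [Ordinal.card_typein]
      _ < κ := lt_of_lt_of_le (Cardinal.card_typein_toType_lt (#𝓐) ξ) hcard
  set U : o.ToType → Set α := fun ξ => ⋃ η ∈ Set.Iio ξ, A η with hU
  set B : o.ToType → Set α := fun ξ => A ξ \ U ξ with hB
  have hBne : ∀ ξ, (B ξ).Nonempty := by
    intro ξ
    rw [Set.nonempty_iff_ne_empty]
    intro hemp
    have hsub : A ξ ⊆ U ξ := by rwa [hB, Set.diff_eq_empty] at hemp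
    have hinter : A ξ ⊆ ⋃ η : Set.Iio ξ, (A ξ ∩ A η.1) := by
      intro x hx
      rcases Set.mem_iUnion₂.mp (hsub hx) with ⟨η, hη, hxη⟩
      exact Set.mem_iUnion.mpr ⟨⟨η, hη⟩, ⟨hx, hxη⟩⟩
    have hle : #(A ξ) ≤ #{η : o.ToType // η < ξ} * ℵ₀ := by
      calc #(A ξ) ≤ #((⋃ η : Set.Iio ξ, (A ξ ∩ A η.1) : Set α)) := Cardinal.mk_le_mk_of_subset hinter
        _ ≤ Cardinal.sum (fun η : Set.Iio ξ => #((A ξ ∩ A η.1 : Set α))) := Cardinal.mk_iUnion_le_sum_mk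
        _ ≤ Cardinal.sum (fun _ : Set.Iio ξ => ℵ₀) := by
            apply Cardinal.sum_le_sum
            intro η
            have hneq : A ξ ≠ A η.1 := hAne _ _ (ne_of_gt η.2)
            have : (A ξ ∩ A η.1).Finite := hfin _ (hAmem ξ) _ (hAmem η.1) hneq
            exact (Cardinal.lt_aleph0_iff_set_finite.mpr this).le
        _ = #(Set.Iio ξ) * ℵ₀ := Cardinal.sum_const' _ _
        _ = #{η : o.ToType // η < ξ} * ℵ₀ := rfl
    have hlt : #{η : o.ToType // η < ξ} * ℵ₀ < κ :=
      Cardinal.mul_lt_of_lt haleph.le (hIio ξ) haleph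
    rw [hspec _ (hAmem ξ)] at hle
    exact absurd (lt_of_le_of_lt hle hlt) (lt_irrefl _)
  set m : o.ToType → α := fun ξ => (hBne ξ).choose with hm
  have hmB : ∀ ξ, m ξ ∈ B ξ := fun ξ => (hBne ξ).choose_spec
  have hmA : ∀ ξ, m ξ ∈ A ξ := fun ξ => (hmB ξ).1
  have hxex : ∀ x : (⋃₀ 𝓐 : Set α), ∃ ξ, (x : α) ∈ A ξ := by
    intro x
    rcases x.2 with ⟨E, hE, hxE⟩
    refine ⟨e.symm ⟨E, hE⟩, ?_⟩
    simpa [hA] using hxE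
  set blk : (⋃₀ 𝓐 : Set α) → o.ToType := fun x =>
    (wellFounded_lt (α := o.ToType)).min {ξ | (x : α) ∈ A ξ} (hxex x) with hblk
  have hblk_mem : ∀ x, (x : α) ∈ A (blk x) := fun x =>
    (wellFounded_lt (α := o.ToType)).min_mem _ (hxex x)
  have hblk_le : ∀ (x : (⋃₀ 𝓐 : Set α)) (ξ : o.ToType), (x : α) ∈ A ξ → blk x ≤ ξ := by
    intro x ξ hξ
    exact not_lt.mp ((wellFounded_lt (α := o.ToType)).not_lt_min {ξ | (x : α) ∈ A ξ} hξ)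
  set key : (⋃₀ 𝓐 : Set α) → o.ToType × Bool × α := fun x =>
    (blk x, decide ((x : α) = m (blk x)), (x : α)) with hkey
  set s : o.ToType × Bool × α → o.ToType × Bool × α → Prop :=
    Prod.Lex (· < ·) (Prod.Lex (· < ·) WellOrderingRel) with hs
  haveI hso : IsWellOrder (o.ToType × Bool × α) s := by
    rw [hs]; exact inferInstance
  have keyinj : Function.Injective key := by
    intro x y h
    have : (x : α) = (y : α) := congrArg (fun p => p.2.2) h
    exact Subtype.ext this
  refine ⟨fun x y => s (key x) (key y), ?_, ?_⟩
  · exact RelEmbedding.isWellOrder (⟨⟨key, keyinj⟩, Iff.rfl⟩ : _ ↪r s)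
  · intro E hE
    set ξ₀ := e.symm ⟨E, hE⟩ with hξ₀
    have hAξ₀ : A ξ₀ = E := by simp [hA, hξ₀]
    have hmE : m ξ₀ ∈ E := hAξ₀ ▸ hmA ξ₀
    have hmV : m ξ₀ ∈ ⋃₀ 𝓐 := ⟨E, hE, hmE⟩
    set mm : (⋃₀ 𝓐 : Set α) := ⟨m ξ₀, hmV⟩ with hmm
    have hblkm : blk mm = ξ₀ := by
      apply le_antisymm (hblk_le mm ξ₀ (hAξ₀ ▸ hmE))
      by_contra hlt
      push_neg at hlt
      have : (mm : α) ∈ U ξ₀ := Set.mem_biUnion hlt (hblk_mem mm)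
      exact (hmB ξ₀).2 this
    refine ⟨mm, hmE, ?_⟩
    intro x hxE hr
    have hxle : blk x ≤ ξ₀ := hblk_le x ξ₀ (hAξ₀ ▸ hxE)
    rw [hs, Prod.lex_def] at hr
    rcases hr with h1 | ⟨h1, h2⟩
    · simp only [hkey, hblkm] at h1
      exact absurd (lt_of_lt_of_le h1 hxle) (lt_irrefl _)
    · simp only [hkey] at h1 h2
      rw [hblkm] at h1
      rw [Prod.lex_def] at h2
      have hflag : decide ((mm : α) = m (blk mm)) = true := by
        rw [hblkm]; simp [hmm]
      rcases h2 with h2 | ⟨h2, h3⟩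
      · simp only [hflag] at h2
        rcases Bool.lt_iff.mp h2 with ⟨hfalse, _⟩
        exact Bool.noConfusion hfalse
      · simp only [hflag] at h2
        have hxm : (x : α) = m (blk x) := of_decide_eq_true h2.symm
        rw [← h1] at hxm
        have hxmm : x = mm := Subtype.ext (by rw [hxm])
        rw [hxmm] at h3
        exact (irrefl_of WellOrderingRel _) h3

/-- Assuming GCH, for `κ ≥ ω₂` every hypergraph `𝓐 ⊆ [κ]^κ` possessing property
C(2,ω) has at most `κ` edges and has a maximizing well-ordering. -/
theorem maxWO_kappa_kappa_of_GCH {α : Type u}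
    (hGCH : ∀ μ : Cardinal.{u}, ℵ₀ ≤ μ → 2 ^ μ = Order.succ μ)
    (κ : Cardinal.{u}) (hκ : Cardinal.aleph 2 ≤ κ) (hα : #α = κ)
    (𝓐 : Set (Set α)) (hspec : ∀ A ∈ 𝓐, #A = κ)
    (hC : HasPropC 𝓐 2 ℵ₀) :
    #𝓐 ≤ κ ∧ HasMaxWO 𝓐 := by
  classical
  have hfin : ∀ A ∈ 𝓐, ∀ B ∈ 𝓐, A ≠ B → (A ∩ B).Finite := by
    intro A hA B hB hne
    have hcard : ({A, B} : Finset (Set α)).card = 2 := Finset.card_pair hne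
    have hsubset : ↑({A, B} : Finset (Set α)) ⊆ 𝓐 := by
      intro E hE
      simp only [Finset.coe_insert, Finset.coe_singleton, Set.mem_insert_iff,
        Set.mem_singleton_iff] at hE
      rcases hE with h | h <;> subst h <;> assumption
    have hlt := hC _ hsubset hcard
    rw [show ((({A, B} : Finset (Set α)) : Set (Set α))) = {A, B} from by simp,
      Set.sInter_pair] at hlt
    exact Cardinal.lt_aleph0_iff_set_finite.mp hlt
  have haleph : ℵ₀ < κ := by
    refine lt_of_lt_of_le ?_ hκ
    rw [← Cardinal.aleph_zero]
    exact Cardinal.aleph_lt_aleph.mpr (by norm_num)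
  have h1 : #𝓐 ≤ κ := mk_le_kappa_aux hGCH κ hκ hα 𝓐 hspec hfin
  exact ⟨h1, hasMaxWO_aux κ haleph 𝓐 hspec hfin h1⟩
end

section
/- Let ω ≤ κ < λ be infinite cardinals and let 𝓐 ⊆ [λ]^κ be a hypergraph possessing property C(k,r) for some k, r ∈ ω. Then there is an increasing continuous sequence ⟨G_α : α < cf(λ)⟩ of subsets of λ, each of cardinality < λ, with G_0 = ∅ and ⋃_{α<cf(λ)} G_α = λ, such that for every A ∈ 𝓐 there is α < cf(λ) with A ⊆ G_{α+1} and |G_α ∩ A| < |A|; in particular, if |⋃𝓐| = λ then 𝓐 has a good cut. -/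
open Cardinal Set

universe u

namespace GoodCutAux

variable {α : Type u}

lemma exists_finset_subset_card (s : Set α) (n : ℕ) (h : (n : Cardinal) ≤ #s) :
    ∃ t : Finset α, ↑t ⊆ s ∧ t.card = n := by
  rcases s.finite_or_infinite with hs | hs
  · have : Fintype s := hs.fintype
    rw [Cardinal.mk_fintype, Nat.cast_le, ← Set.toFinset_card] at h
    obtain ⟨t, ht, hc⟩ := Finset.exists_subset_card_eq h
    exact ⟨t, fun x hx => Set.mem_toFinset.1 (ht hx), hc⟩
  · obtain ⟨t, ht, hc⟩ := hs.exists_subset_card_eq n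
    exact ⟨t, ht, hc⟩

variable (𝓐 : Set (Set α)) (k r : ℕ)

lemma fiber_le (hC : HasPropC 𝓐 k r) (T : Finset α) (hT : T.card = r) :
    #{A : Set α | A ∈ 𝓐 ∧ ↑T ⊆ A} ≤ (k : Cardinal) := by
  by_contra h
  push_neg at h
  obtain ⟨𝓔', h𝓔', hcard⟩ := exists_finset_subset_card _ k h.le
  have h1 : (↑T : Set α) ⊆ ⋂₀ (𝓔' : Set (Set α)) :=
    subset_sInter fun A hA => (h𝓔' hA).2
  have h2 := hC 𝓔' (fun A hA => (h𝓔' hA).1) hcard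
  have h3 : (r : Cardinal) ≤ #(⋂₀ (𝓔' : Set (Set α)) : Set α) := by
    calc (r : Cardinal) = #(↑T : Set α) := by
          rw [← hT]; exact (Cardinal.mk_coe_finset (s := T)).symm
    _ ≤ _ := Cardinal.mk_le_mk_of_subset h1
  exact absurd h2 (not_lt.2 h3)

/-- The family of edges with intersection of size at least `r` with `S`. -/
def bad (S : Set α) : Set (Set α) := {A | A ∈ 𝓐 ∧ (r : Cardinal) ≤ #(A ∩ S : Set α)}

lemma card_bad (hC : HasPropC 𝓐 k r) (S : Set α) :
    #(bad 𝓐 r S) ≤ max #S ℵ₀ := by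
  classical
  have hch : ∀ A : bad 𝓐 r S, ∃ t : Finset α, ↑t ⊆ (A : Set α) ∩ S ∧ t.card = r := fun A =>
    exists_finset_subset_card _ r A.2.2
  choose T hT1 hT2 using hch
  set φ : bad 𝓐 r S → Finset S := fun A => (T A).subtype (· ∈ S) with hφ
  have key : ∀ A, ((φ A).map (Function.Embedding.subtype _)) = T A := by
    intro A
    rw [hφ, Finset.subtype_map, Finset.filter_true_of_mem]
    intro x hx
    exact (hT1 A hx).2
  have hfib : ∀ b : Finset S, #(φ ⁻¹' {b}) ≤ (k : Cardinal) := by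
    intro b
    rcases Set.eq_empty_or_nonempty (φ ⁻¹' {b}) with he | ⟨A₀, hA₀⟩
    · rw [he]; simp
    · have hTeq : ∀ A : bad 𝓐 r S, A ∈ φ ⁻¹' {b} → T A = T A₀ := by
        intro A hA
        have : φ A = φ A₀ := by
          rw [Set.mem_preimage, Set.mem_singleton_iff] at hA hA₀
          rw [hA, hA₀]
        rw [← key A, ← key A₀, this]
      have inj : ∃ f : (φ ⁻¹' {b}) → {A : Set α | A ∈ 𝓐 ∧ ↑(T A₀) ⊆ A},
          Function.Injective f := by
        refine ⟨fun x => ⟨(x.1 : Set α), x.1.2.1, ?_⟩, ?_⟩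
        · intro y hy
          have hy' : y ∈ ↑(T x.1) := by rw [hTeq x.1 x.2]; exact hy
          exact (hT1 x.1 hy').1
        · intro x y hxy
          apply Subtype.ext; apply Subtype.ext
          simpa using congrArg Subtype.val hxy
      obtain ⟨f, hf⟩ := inj
      exact (Cardinal.mk_le_of_injective hf).trans (fiber_le 𝓐 k r hC _ (hT2 A₀))
  have h1 : #(bad 𝓐 r S) ≤ #(Finset S) * k :=
    Cardinal.mk_le_mk_mul_of_mk_preimage_le φ hfib
  have h2 : #(Finset S) ≤ max #S ℵ₀ := by
    rcases S.finite_or_infinite with hs | hs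
    · have : Fintype S := hs.fintype
      exact le_max_of_le_right (Cardinal.lt_aleph0_of_finite (Finset S)).le
    · have : Infinite S := hs.to_subtype
      rw [Cardinal.mk_finset_of_infinite]
      exact le_max_left _ _
  calc #(bad 𝓐 r S) ≤ #(Finset S) * k := h1
    _ ≤ max #S ℵ₀ * ℵ₀ := mul_le_mul' h2 (nat_lt_aleph0 k).le
    _ = max #S ℵ₀ := by
        rw [Cardinal.mul_eq_max (le_max_right _ _) le_rfl, max_assoc, max_self]

/-- One closure step: add all bad edges. -/
def step (S : Set α) : Set α := S ∪ ⋃₀ (bad 𝓐 r S)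

/-- The closure: iterate `step` ω times. -/
def cl (S : Set α) : Set α := ⋃ n : ULift.{u} ℕ, (step 𝓐 r)^[n.down] S

lemma subset_step (S : Set α) : S ⊆ step 𝓐 r S := Set.subset_union_left

lemma iter_mono (S : Set α) : Monotone fun n : ℕ => (step 𝓐 r)^[n] S :=
  monotone_nat_of_le_succ fun n => by
    rw [Function.iterate_succ_apply']
    exact subset_step 𝓐 r _

lemma subset_cl (S : Set α) : S ⊆ cl 𝓐 r S := by
  have := Set.subset_iUnion (fun n : ULift.{u} ℕ => (step 𝓐 r)^[n.down] S) (ULift.up 0)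
  simpa [cl] using this

lemma finset_subset_iUnion {ι : Sort*} [Nonempty ι] {f : ι → Set α}
    (hdir : ∀ i j, ∃ l, f i ⊆ f l ∧ f j ⊆ f l) (T : Finset α) (hT : ↑T ⊆ ⋃ i, f i) :
    ∃ i, ↑T ⊆ f i := by
  classical
  induction T using Finset.induction with
  | empty => exact ⟨Classical.arbitrary ι, by simp⟩
  | @insert a T ha ih =>
    obtain ⟨i, hi⟩ := ih (fun x hx => hT (by simp [hx]))
    obtain ⟨j, hj⟩ := Set.mem_iUnion.1 (hT (Finset.mem_coe.2 (Finset.mem_insert_self a T)))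
    obtain ⟨l, hl1, hl2⟩ := hdir j i
    refine ⟨l, ?_⟩
    intro x hx
    rcases Finset.mem_insert.1 (by exact_mod_cast hx) with rfl | hx'
    · exact hl1 hj
    · exact hl2 (hi hx')

lemma iter_dir (S : Set α) : ∀ i j : ULift.{u} ℕ,
    ∃ l : ULift.{u} ℕ, (step 𝓐 r)^[i.down] S ⊆ (step 𝓐 r)^[l.down] S ∧
      (step 𝓐 r)^[j.down] S ⊆ (step 𝓐 r)^[l.down] S := fun i j =>
  ⟨ULift.up (max i.down j.down), iter_mono 𝓐 r S (le_max_left _ _),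
    iter_mono 𝓐 r S (le_max_right _ _)⟩

lemma cl_closed (S A : Set α) (hA : A ∈ 𝓐)
    (h : (r : Cardinal) ≤ #(A ∩ cl 𝓐 r S : Set α)) : A ⊆ cl 𝓐 r S := by
  obtain ⟨T, hT1, hT2⟩ := exists_finset_subset_card _ r h
  have hTcl : ↑T ⊆ ⋃ n : ULift.{u} ℕ, (step 𝓐 r)^[n.down] S := fun x hx => (hT1 hx).2
  obtain ⟨n, hn⟩ := finset_subset_iUnion (iter_dir 𝓐 r S) T hTcl
  have hbad : A ∈ bad 𝓐 r ((step 𝓐 r)^[n.down] S) := by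
    refine ⟨hA, ?_⟩
    have hsub : ↑T ⊆ A ∩ (step 𝓐 r)^[n.down] S :=
      Set.subset_inter (fun x hx => (hT1 hx).1) hn
    calc (r : Cardinal) = #(↑T : Set α) := by
          rw [← hT2]; exact (Cardinal.mk_coe_finset (s := T)).symm
    _ ≤ _ := Cardinal.mk_le_mk_of_subset hsub
  have hstep : A ⊆ (step 𝓐 r)^[n.down + 1] S := by
    rw [Function.iterate_succ_apply']
    exact (Set.subset_sUnion_of_mem hbad).trans Set.subset_union_right
  exact hstep.trans (Set.subset_iUnion (fun m : ULift.{u} ℕ => (step 𝓐 r)^[m.down] S)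
    (ULift.up (n.down + 1)))

variable (κ : Cardinal.{u})

lemma card_step (hC : HasPropC 𝓐 k r) (hκ : ℵ₀ ≤ κ) (hspec : ∀ A ∈ 𝓐, #A = κ)
    {μ : Cardinal.{u}} (hμκ : κ ≤ μ) (X : Set α) (hX : #X ≤ μ) :
    #(step 𝓐 r X : Set α) ≤ μ := by
  have hμ : ℵ₀ ≤ μ := hκ.trans hμκ
  have h1 : #(⋃₀ bad 𝓐 r X : Set α) ≤ μ := by
    refine (Cardinal.mk_sUnion_le _).trans ?_
    have hb : #(bad 𝓐 r X) ≤ μ := (card_bad 𝓐 k r hC X).trans (max_le hX hμ)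
    have hs : ⨆ s : bad 𝓐 r X, #(s : Set α) ≤ κ := by
      rcases isEmpty_or_nonempty (bad 𝓐 r X) with he | hne
      · rw [ciSup_of_empty]
        exact zero_le
      · exact ciSup_le' fun s => (hspec s.1 s.2.1).le
    calc #(bad 𝓐 r X) * ⨆ s : bad 𝓐 r X, #(s : Set α) ≤ μ * κ := mul_le_mul' hb hs
    _ ≤ μ * μ := mul_le_mul' le_rfl hμκ
    _ = μ := Cardinal.mul_eq_self hμ
  calc #(step 𝓐 r X : Set α) ≤ #X + #(⋃₀ bad 𝓐 r X : Set α) := Cardinal.mk_union_le _ _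
  _ ≤ μ + μ := add_le_add hX h1
  _ = μ := Cardinal.add_eq_self hμ

lemma card_cl (hC : HasPropC 𝓐 k r) (hκ : ℵ₀ ≤ κ) (hspec : ∀ A ∈ 𝓐, #A = κ)
    (S : Set α) : #(cl 𝓐 r S : Set α) ≤ max #S κ := by
  set μ := max #S κ with hμdef
  have hκμ : κ ≤ μ := le_max_right _ _
  have hμ : ℵ₀ ≤ μ := hκ.trans hκμ
  have iter : ∀ n : ℕ, #((step 𝓐 r)^[n] S : Set α) ≤ μ := by
    intro n
    induction n with
    | zero => rw [Function.iterate_zero_apply]; exact le_max_left #S κ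
    | succ n ih =>
      rw [Function.iterate_succ_apply']
      exact card_step 𝓐 k r κ hC hκ hspec hκμ _ ih
  refine (Cardinal.mk_iUnion_le _).trans ?_
  have hUL : #(ULift.{u} ℕ) ≤ ℵ₀ := by
    rw [Cardinal.mk_uLift]
    simp
  calc #(ULift.{u} ℕ) * ⨆ n : ULift.{u} ℕ, #((step 𝓐 r)^[n.down] S : Set α)
      ≤ ℵ₀ * μ := mul_le_mul' hUL (ciSup_le' fun n => iter n.down)
  _ ≤ μ * μ := mul_le_mul' hμ le_rfl
  _ = μ := Cardinal.mul_eq_self hμ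


lemma main {α : Type u} (κ lam : Cardinal.{u}) (hκ : ℵ₀ ≤ κ) (hkl : κ < lam) (hα : #α = lam)
    (k r : ℕ) (hr1 : 1 ≤ r) (𝓐 : Set (Set α)) (hspec : ∀ A ∈ 𝓐, #A = κ)
    (hC : HasPropC 𝓐 k r) :
    ∃ G : Ordinal.{u} → Set α,
      (∀ β γ : Ordinal.{u}, β ≤ γ → G β ⊆ G γ) ∧
      G 0 = ∅ ∧
      (∀ β : Ordinal.{u}, Order.IsSuccLimit β → G β = ⋃ γ ∈ Set.Iio β, G γ) ∧
      (∀ β < lam.ord.cof.ord, #(G β) < lam) ∧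
      (⋃ β ∈ Set.Iio lam.ord.cof.ord, G β) = Set.univ ∧
      (∀ A ∈ 𝓐, ∃ β < lam.ord.cof.ord, A ⊆ G (β + 1) ∧ #(G β ∩ A : Set α) < #A) := by
  classical
  have hlam : ℵ₀ ≤ lam := hκ.trans hkl.le
  have hord : Order.IsSuccLimit lam.ord := Cardinal.isSuccLimit_ord hlam
  set c := lam.ord.cof.ord with hcdef
  have hcof : ℵ₀ ≤ lam.ord.cof := Ordinal.aleph0_le_cof.2 hord
  have hclim : Order.IsSuccLimit c := Cardinal.isSuccLimit_ord hcof
  have hmk : #α = #(lam.ord.ToType) := by rw [Cardinal.mk_toType, Cardinal.card_ord, hα]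
  obtain ⟨e⟩ := Cardinal.eq.1 hmk
  haveI : IsWellOrder lam.ord.ToType (· < ·) := isWellOrder_lt
  obtain ⟨f, hf⟩ := Ordinal.exists_fundamental_sequence lam.ord
  set g : Ordinal.{u} → Ordinal.{u} := fun β => if h : β < c then f β h else 0 with hg
  have hglt : ∀ β, g β < lam.ord := by
    intro β
    rw [hg]; dsimp only
    split
    · exact hf.lt _
    · exact hord.pos
  set chunk : Ordinal.{u} → Set α :=
    fun β => {x | Ordinal.typein (α := lam.ord.ToType) (· < ·) (e x) ≤ g β} with hchunkdef
  have hchunkcard : ∀ β, #(chunk β) < lam := by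
    intro β
    have h1 : g β + 1 < lam.ord := hord.add_one_lt (hglt β)
    have h1' : g β + 1 < Ordinal.type (α := lam.ord.ToType) (· < ·) := by
      rwa [Ordinal.type_toType]
    obtain ⟨z, hz⟩ := Ordinal.typein_surj (α := lam.ord.ToType) (· < ·) h1'
    have hset : chunk β = e ⁻¹' {y | y < z} := by
      ext x
      simp only [hchunkdef, Set.mem_setOf_eq, Set.mem_preimage]
      have hiff : (e x < z) ↔ Ordinal.typein (α := lam.ord.ToType) (· < ·) (e x) <
          Ordinal.typein (α := lam.ord.ToType) (· < ·) z :=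
        (Ordinal.typein_lt_typein _).symm
      rw [hiff, hz, Ordinal.add_one_eq_succ, Order.lt_succ_iff]
    have hpre : #(chunk β) = #({y : lam.ord.ToType | y < z} : Set _) := by
      rw [hset]
      exact Cardinal.mk_preimage_of_injective_of_subset_range e _ e.injective
        (by rw [e.range_eq_univ]; exact Set.subset_univ _)
    have hIio : #({y : lam.ord.ToType | y < z} : Set _) =
        (Ordinal.typein (α := lam.ord.ToType) (· < ·) z).card :=
        @Ordinal.card_typein lam.ord.ToType (· < ·) isWellOrder_lt z
    rw [hpre, hIio, hz]
    exact Cardinal.lt_ord.1 h1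
  set G : Ordinal.{u} → Set α := fun β =>
    Ordinal.limitRecOn β ∅ (fun γ ih => cl 𝓐 r (ih ∪ chunk γ))
      (fun β _ ih => ⋃ (γ : Ordinal.{u}) (h : γ < β), ih γ h) with hGdef
  have G0 : G 0 = ∅ := Ordinal.limitRecOn_zero _ _ _
  have Gsucc : ∀ γ, G (Order.succ γ) = cl 𝓐 r (G γ ∪ chunk γ) := fun γ =>
    Ordinal.limitRecOn_succ _ _ _ _
  have Glim : ∀ β, Order.IsSuccLimit β → G β = ⋃ γ ∈ Set.Iio β, G γ := by
    intro β hβ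
    have : G β = ⋃ (γ : Ordinal.{u}) (h : γ < β), G γ := Ordinal.limitRecOn_limit _ _ _ _ hβ
    rw [this]
    simp only [Set.mem_Iio]
  have Gmono : ∀ γ β : Ordinal.{u}, β ≤ γ → G β ⊆ G γ := by
    intro γ
    induction γ using Ordinal.limitRecOn with
    | zero =>
      intro β hβ
      rw [nonpos_iff_eq_zero.1 hβ]
    | add_one γ ih =>
      intro β hβ
      rw [Ordinal.add_one_eq_succ] at hβ ⊢
      rcases eq_or_lt_of_le hβ with rfl | hβ'
      · exact subset_rfl
      · have hβγ : β ≤ γ := Order.lt_succ_iff.1 hβ'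
        rw [Gsucc γ]
        exact (ih β hβγ).trans (Set.subset_union_left.trans (subset_cl 𝓐 r _))
    | limit γ hγ ih =>
      intro β hβ
      rcases eq_or_lt_of_le hβ with rfl | hβ'
      · exact subset_rfl
      · rw [Glim γ hγ]
        exact Set.subset_biUnion_of_mem (Set.mem_Iio.2 hβ')
  have Gcover : (⋃ β ∈ Set.Iio c, G β) = Set.univ := by
    apply Set.eq_univ_of_forall
    intro x
    have hx : Ordinal.typein (α := lam.ord.ToType) (· < ·) (e x) < lam.ord :=
      Ordinal.typein_lt_self _
    have hx' : Ordinal.typein (α := lam.ord.ToType) (· < ·) (e x) <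
        Ordinal.blsub lam.ord.cof.ord f := by rw [hf.blsub_eq]; exact hx
    rw [Ordinal.lt_blsub_iff] at hx'
    obtain ⟨i, hi, hxi⟩ := hx' 
    have hic : i < c := hi
    have hxchunk : x ∈ chunk i := by
      rw [hchunkdef]
      show Ordinal.typein (α := lam.ord.ToType) (· < ·) (e x) ≤ g i
      rw [hg]
      dsimp only
      rw [dif_pos hic]
      exact hxi
    have hmem : x ∈ G (Order.succ i) := by
      rw [Gsucc]
      exact subset_cl 𝓐 r _ (Set.mem_union_right _ hxchunk)
    exact Set.mem_biUnion (Set.mem_Iio.2 (hclim.succ_lt hic)) hmem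
  have Gcard : ∀ β : Ordinal.{u}, β < c → #(G β) < lam := by
    intro β
    induction β using Ordinal.limitRecOn with
    | zero =>
      intro _
      rw [G0]
      simpa using lt_of_lt_of_le Cardinal.aleph0_pos hlam
    | add_one γ ih =>
      intro h
      rw [Ordinal.add_one_eq_succ] at h ⊢
      have hγ : γ < c := (Order.lt_succ γ).trans h
      rw [Gsucc]
      refine lt_of_le_of_lt (card_cl 𝓐 k r κ hC hκ hspec _) (max_lt ?_ hkl)
      refine lt_of_le_of_lt (Cardinal.mk_union_le _ _) ?_
      exact Cardinal.add_lt_of_lt hlam (ih hγ) (hchunkcard γ)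
    | limit β hβ ih =>
      intro h
      rw [Glim β hβ]
      set E := (Ordinal.ToType.mk (o := β)) with hE
      have heq : (⋃ γ ∈ Set.Iio β, G γ) = ⋃ i : β.ToType, G ((E.symm i : Set.Iio β) : Ordinal) := by
        ext x
        simp only [Set.mem_iUnion, Set.mem_Iio]
        constructor
        · rintro ⟨γ, hγ, hx⟩
          refine ⟨E ⟨γ, hγ⟩, ?_⟩
          rwa [OrderIso.symm_apply_apply]
        · rintro ⟨i, hx⟩
          exact ⟨_, (E.symm i).2, hx⟩
      rw [heq]
      refine lt_of_le_of_lt (Cardinal.mk_iUnion_le _) ?_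
      have h1 : #β.ToType = β.card := Cardinal.mk_toType β
      have h2 : β.card < lam.ord.cof := Cardinal.lt_ord.1 h
      have h3 : (⨆ i : β.ToType, #(G ((E.symm i : Set.Iio β) : Ordinal))) < lam := by
        rcases isEmpty_or_nonempty β.ToType with he | hne
        · rw [ciSup_of_empty]
          exact lt_of_lt_of_le Cardinal.aleph0_pos hlam
        · exact Cardinal.iSup_lt_of_lt_cof_ord (by rwa [h1]) fun i =>
            ih _ (E.symm i).2 ((E.symm i).2.trans h)
      calc #β.ToType * (⨆ i : β.ToType, #(G ((E.symm i : Set.Iio β) : Ordinal)))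
          ≤ max (max #β.ToType (⨆ i : β.ToType, #(G ((E.symm i : Set.Iio β) : Ordinal)))) ℵ₀ :=
            Cardinal.mul_le_max _ _
      _ < lam := by
          refine max_lt (max_lt ?_ h3) (lt_of_le_of_lt hκ hkl)
          rw [h1]
          exact lt_of_lt_of_le h2 (Ordinal.cof_ord_le lam)
  have edge : ∀ A ∈ 𝓐, ∃ β < c, A ⊆ G (β + 1) ∧ #(G β ∩ A : Set α) < #A := by
    intro A hA
    have hAκ := hspec A hA
    have hfin : ∀ T : Finset α, ∃ β < c, ↑T ⊆ G β := by
      intro T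
      induction T using Finset.induction with
      | empty => exact ⟨0, hclim.pos, by simp⟩
      | @insert a T ha ih =>
        obtain ⟨β₁, hβ₁, h1⟩ := ih
        have hmema : a ∈ (⋃ β ∈ Set.Iio c, G β) := by rw [Gcover]; trivial
        rw [Set.mem_iUnion₂] at hmema
        obtain ⟨β₂, hβ₂, h2⟩ := hmema
        refine ⟨max β₁ β₂, max_lt hβ₁ (Set.mem_Iio.1 hβ₂), ?_⟩
        intro x hx
        rcases Finset.mem_insert.1 (Finset.mem_coe.1 hx) with rfl | hx'
        · exact Gmono _ _ (le_max_right _ _) h2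
        · exact Gmono _ _ (le_max_left _ _) (h1 hx')
    obtain ⟨T, hT1, hT2⟩ := exists_finset_subset_card A r
      (by rw [hAκ]; exact (Cardinal.nat_lt_aleph0 r).le.trans hκ)
    obtain ⟨β₁, hβ₁, hTβ⟩ := hfin T
    set S := {β : Ordinal.{u} | β < c ∧ (r : Cardinal) ≤ #(A ∩ G β : Set α)} with hSdef
    have hmemS : β₁ ∈ S := by
      refine ⟨hβ₁, ?_⟩
      have hsub : ↑T ⊆ A ∩ G β₁ := Set.subset_inter hT1 hTβ
      calc (r : Cardinal) = #(↑T : Set α) := by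
            rw [← hT2]; exact (Cardinal.mk_coe_finset (s := T)).symm
      _ ≤ _ := Cardinal.mk_le_mk_of_subset hsub
    have hne : S.Nonempty := ⟨β₁, hmemS⟩
    set β₀ := sInf S with hβ₀def
    have hβ₀S : β₀ ∈ S := csInf_mem hne
    have hmin : ∀ γ, γ < β₀ → γ ∉ S := fun γ hγ => notMem_of_lt_csInf hγ (OrderBot.bddBelow S)
    have h0 : β₀ ≠ 0 := by
      intro h0
      have hcon := hβ₀S.2
      rw [h0, G0, Set.inter_empty, Cardinal.mk_emptyCollection] at hcon
      have : (r : Cardinal) = 0 := le_antisymm hcon zero_le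
      have : r = 0 := by exact_mod_cast this
      omega
    have hnotlim : ¬ Order.IsSuccLimit β₀ := by
      intro hlim
      obtain ⟨T', hT'1, hT'2⟩ := exists_finset_subset_card _ r hβ₀S.2
      have hne' : Nonempty ↥(Set.Iio β₀) :=
        ⟨⟨0, Set.mem_Iio.2 (pos_iff_ne_zero.2 h0)⟩⟩
      have hdir : ∀ i j : ↥(Set.Iio β₀), ∃ l : ↥(Set.Iio β₀),
          G i ⊆ G l ∧ G j ⊆ G l := by
        intro i j
        refine ⟨⟨max i j, Set.mem_Iio.2 (max_lt i.2 j.2)⟩, ?_, ?_⟩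
        · exact Gmono _ _ (le_max_left _ _)
        · exact Gmono _ _ (le_max_right _ _)
      have hsub : ↑T' ⊆ ⋃ γ : ↥(Set.Iio β₀), G γ := by
        intro x hx
        have hxm := (hT'1 hx).2
        rw [Glim β₀ hlim] at hxm
        rw [Set.mem_iUnion₂] at hxm
        obtain ⟨γ, hγ, hxg⟩ := hxm
        exact Set.mem_iUnion.2 ⟨⟨γ, hγ⟩, hxg⟩
      obtain ⟨γ, hγsub⟩ := finset_subset_iUnion hdir T' hsub
      refine hmin γ γ.2 ⟨γ.2.trans hβ₀S.1, ?_⟩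
      have hsub2 : ↑T' ⊆ A ∩ G γ := Set.subset_inter (fun x hx => (hT'1 hx).1) hγsub
      calc (r : Cardinal) = #(↑T' : Set α) := by
            rw [← hT'2]; exact (Cardinal.mk_coe_finset (s := T')).symm
      _ ≤ _ := Cardinal.mk_le_mk_of_subset hsub2
    obtain ⟨γ₀, hγ₀⟩ := ((Ordinal.zero_or_succ_or_isSuccLimit β₀).resolve_left h0).resolve_right hnotlim
    have hγ₀β₀ : γ₀ < β₀ := by rw [← hγ₀]; exact Order.lt_succ γ₀
    have hγ₀c : γ₀ < c := hγ₀β₀.trans hβ₀S.1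
    refine ⟨γ₀, hγ₀c, ?_, ?_⟩
    · have hge : (r : Cardinal) ≤ #(A ∩ cl 𝓐 r (G γ₀ ∪ chunk γ₀) : Set α) := by
        have hcon := hβ₀S.2
        rwa [← hγ₀, Gsucc] at hcon
      have hsub := cl_closed 𝓐 r _ A hA hge
      rw [Ordinal.add_one_eq_succ, Gsucc]
      exact hsub
    · have hnle : ¬ (r : Cardinal) ≤ #(A ∩ G γ₀ : Set α) := fun hcon =>
        hmin γ₀ hγ₀β₀ ⟨hγ₀c, hcon⟩
      push_neg at hnle
      rw [Set.inter_comm]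
      calc #(A ∩ G γ₀ : Set α) < r := hnle
      _ < ℵ₀ := Cardinal.nat_lt_aleph0 r
      _ ≤ κ := hκ
      _ = #A := hAκ.symm
  exact ⟨G, fun β γ hbg => Gmono γ β hbg, G0, fun β hβ => Glim β hβ,
    Gcard, Gcover, edge⟩

end GoodCutAux

/-- If `ω ≤ κ < lam` and `𝓐 ⊆ [lam]^κ` possesses property C(k,r) for some
`k, r ∈ ω`, then there is an increasing continuous sequence
`⟨G_β : β < cf(lam)⟩` of subsets of `lam`, each of cardinality `< lam`, with
`G_0 = ∅` and union all of `lam`, such that every `A ∈ 𝓐` satisfies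
`A ⊆ G (β+1)` and `|G β ∩ A| < |A|` for some `β < cf(lam)`; in particular, if
`|⋃₀ 𝓐| = lam` then `𝓐` has a good cut. -/
theorem goodCut_of_propC {α : Type u}
    (κ lam : Cardinal.{u}) (hκ : ℵ₀ ≤ κ) (hkl : κ < lam) (hα : #α = lam)
    (k r : ℕ)
    (𝓐 : Set (Set α)) (hspec : ∀ A ∈ 𝓐, #A = κ)
    (hC : HasPropC 𝓐 k r) :
    (∃ G : Ordinal.{u} → Set α,
      (∀ β γ : Ordinal.{u}, β ≤ γ → γ < lam.ord.cof.ord → G β ⊆ G γ) ∧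
      G 0 = ∅ ∧
      (∀ β < lam.ord.cof.ord, Order.IsSuccLimit β → G β = ⋃ γ ∈ Set.Iio β, G γ) ∧
      (∀ β < lam.ord.cof.ord, #(G β) < lam) ∧
      (⋃ β ∈ Set.Iio lam.ord.cof.ord, G β) = Set.univ ∧
      (∀ A ∈ 𝓐, ∃ β < lam.ord.cof.ord,
        A ⊆ G (β + 1) ∧ #(G β ∩ A : Set α) < #A)) ∧
    (#(⋃₀ 𝓐 : Set α) = lam → ∃ G', IsGoodCut 𝓐 G') := by
  have hC' : HasPropC 𝓐 k ((max r 1 : ℕ) : Cardinal) := by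
    intro 𝓔' h1 h2
    exact lt_of_lt_of_le (hC 𝓔' h1 h2) (Nat.cast_le.mpr (Nat.le_max_left r 1))
  obtain ⟨G, Gmono, G0, Glim, Gcard, Gcover, Gedge⟩ :=
    GoodCutAux.main κ lam hκ hkl hα k (max r 1) (Nat.le_max_right r 1) 𝓐 hspec hC'
  refine ⟨⟨G, fun β γ h _ => Gmono β γ h, G0, fun β _ hβ => Glim β hβ, Gcard, Gcover, Gedge⟩, ?_⟩
  intro hU
  refine ⟨fun β => G β ∩ ⋃₀ 𝓐, ?_⟩
  unfold IsGoodCut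
  rw [hU]
  refine ⟨?_, ?_, ?_, ?_, ?_, ?_⟩
  · exact fun β γ h _ => Set.inter_subset_inter_left _ (Gmono β γ h)
  · beta_reduce
    rw [G0, Set.empty_inter]
  · intro β _ hβ
    beta_reduce
    rw [Glim β hβ, Set.iUnion₂_inter]
  · intro β hβ
    exact ⟨lt_of_le_of_lt (Cardinal.mk_le_mk_of_subset Set.inter_subset_left) (Gcard β hβ),
      Set.inter_subset_right⟩
  · beta_reduce
    rw [← Set.iUnion₂_inter, Gcover, Set.univ_inter]
  · intro A hA
    obtain ⟨β, hβ, hsub, hcard⟩ := Gedge A hA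
    refine ⟨β, hβ, Set.subset_inter hsub (fun x hx => ⟨A, hA, hx⟩), ?_⟩
    refine lt_of_le_of_lt (Cardinal.mk_le_mk_of_subset ?_) hcard
    intro x hx
    exact ⟨hx.1.1, hx.2⟩
end

section
/- If 𝓐 is a countable hypergraph possessing property C(k,r) for some k, r ∈ ω, then 𝓐 has a maximizing well-ordering. -/
open Cardinal Set

universe u

section Aux

variable {α : Type u}

private def MyGood (𝓑 : Set (Set α)) (f : α → Ordinal.{u}) : Prop :=
  Set.InjOn f (⋃₀ 𝓑) ∧
  (∀ B ∈ 𝓑, ∃ m ∈ B, ∀ x ∈ B, f x ≤ f m) ∧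
  ((⋃₀ 𝓑).Nonempty → ∃ m ∈ ⋃₀ 𝓑, ∀ x ∈ ⋃₀ 𝓑, f x ≤ f m)

private lemma exists_inj_bdd (α : Type u) :
    ∃ (e : α → Ordinal.{u}) (τ : Ordinal.{u}), Function.Injective e ∧ ∀ x, e x < τ := by
  refine ⟨fun x => (embeddingToCardinal x).ord,
    (⨆ x : α, (embeddingToCardinal x).ord) + 1, ?_, ?_⟩
  · intro a b h
    exact embeddingToCardinal.injective (Cardinal.ord_injective h)
  · intro x
    have h1 : (embeddingToCardinal x).ord ≤ ⨆ x : α, (embeddingToCardinal x).ord :=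
      le_ciSup Ordinal.bddAbove_of_small x
    exact h1.trans_lt (by rw [Ordinal.add_one_eq_succ]; exact Order.lt_succ _)

private lemma good_of_finite_edges (𝓑 : Set (Set α))
    (hfin : ∀ B ∈ 𝓑, B.Finite) (hne : ∀ B ∈ 𝓑, B.Nonempty) :
    ∃ f : α → Ordinal.{u}, MyGood 𝓑 f := by
  classical
  obtain ⟨e, τ, he, heτ⟩ := exists_inj_bdd α
  by_cases hV : (⋃₀ 𝓑).Nonempty
  · obtain ⟨p, hp⟩ := hV
    refine ⟨fun x => if x = p then τ else e x, ?_, ?_, ?_⟩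
    · intro x _ y _ hxy
      by_cases hx : x = p <;> by_cases hy : y = p
      · rw [hx, hy]
      · simp only [if_pos hx, if_neg hy] at hxy; exact absurd hxy.symm (heτ y).ne
      · simp only [if_neg hx, if_pos hy] at hxy; exact absurd hxy (heτ x).ne
      · simp only [if_neg hx, if_neg hy] at hxy; exact he hxy
    · intro B hB
      obtain ⟨m, hm, hmax⟩ := Set.Finite.exists_maximalFor
        (fun x => if x = p then τ else e x) B (hfin B hB) (hne B hB)
      refine ⟨m, hm, fun x hx => ?_⟩
      rcases le_or_gt ((fun x => if x = p then τ else e x) x)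
        ((fun x => if x = p then τ else e x) m) with h | h
      · exact h
      · exact hmax hx h.le
    · intro _
      refine ⟨p, hp, fun x _ => ?_⟩
      by_cases hx : x = p
      · rw [hx]
      · simp only [if_neg hx, if_pos rfl]; exact (heτ x).le
  · rw [Set.not_nonempty_iff_eq_empty] at hV
    refine ⟨fun _ => 0, by rw [hV]; exact Set.injOn_empty _, ?_, ?_⟩
    · intro B hB
      obtain ⟨x, hx⟩ := hne B hB
      have hxV : x ∈ ⋃₀ 𝓑 := ⟨B, hB, hx⟩
      rw [hV] at hxV
      exact absurd hxV (Set.notMem_empty x)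
    · rw [hV]
      rintro ⟨x, hx⟩
      exact absurd hx (Set.notMem_empty x)

private lemma exists_myGood (r : ℕ) :
    ∀ k : ℕ, ∀ 𝓑 : Set (Set α), 𝓑.Countable → (∀ B ∈ 𝓑, B.Nonempty) →
      HasPropC 𝓑 (k + 1) (r : Cardinal.{u}) → ∃ f : α → Ordinal.{u}, MyGood 𝓑 f := by
  intro k
  induction k with
  | zero =>
    intro 𝓑 hcnt hne hC
    refine good_of_finite_edges 𝓑 (fun B hB => ?_) hne
    have h1 := hC {B} (by simpa using hB) (Finset.card_singleton B)
    simp only [Finset.coe_singleton, Set.sInter_singleton] at h1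
    exact Cardinal.lt_aleph0_iff_set_finite.mp (h1.trans (Cardinal.nat_lt_aleph0 r))
  | succ k ih =>
    intro 𝓑 hcnt hne hC
    classical
    rcases Set.eq_empty_or_nonempty 𝓑 with hBe | hBne
    · subst hBe
      exact good_of_finite_edges ∅ (by simp) (by simp)
    obtain ⟨B, hB⟩ := Set.Countable.exists_eq_range hcnt hBne
    subst hB
    obtain ⟨e, τ, he, heτ⟩ := exists_inj_bdd α
    have hAne : ∀ n, (B n).Nonempty := fun n => hne _ ⟨n, rfl⟩
    -- blocks
    obtain ⟨W, hW⟩ : ∃ W : ℕ → Set α, ∀ j, W j = B j \ ⋃ i, ⋃ (_ : i < j), B i :=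
      ⟨_, fun _ => rfl⟩
    have hWmem : ∀ x j, x ∈ W j ↔ x ∈ B j ∧ ∀ i < j, x ∉ B i := by
      intro x j; rw [hW j]; simp [Set.mem_diff]
    have hWsub : ∀ j, W j ⊆ B j := fun j x hx => ((hWmem x j).1 hx).1
    have hW0 : W 0 = B 0 := by rw [hW 0]; simp
    -- index of first block containing x
    obtain ⟨idx, hidx⟩ : ∃ idx : α → ℕ,
        ∀ x, idx x = if h : ∃ n, x ∈ B n then Nat.find h else 0 := ⟨_, fun _ => rfl⟩
    have hmemW : ∀ x (h : ∃ n, x ∈ B n), x ∈ W (idx x) := by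
      intro x h
      have hx : idx x = Nat.find h := by rw [hidx x, dif_pos h]
      rw [hx, hWmem]
      exact ⟨Nat.find_spec h, fun i hi => Nat.find_min h hi⟩
    have hidxW : ∀ x j, x ∈ W j → idx x = j := by
      intro x j hx
      rw [hWmem] at hx
      have h : ∃ n, x ∈ B n := ⟨j, hx.1⟩
      have hx' : idx x = Nat.find h := by rw [hidx x, dif_pos h]
      rw [hx']
      rcases lt_trichotomy (Nat.find h) j with hlt | heq | hgt
      · exact absurd (Nat.find_spec h) (hx.2 _ hlt)
      · exact heq
      · exact absurd (Nat.find_min' h hx.1) (not_le.mpr hgt)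
    have hdisj : ∀ n j, n < j → B n ∩ W j = ∅ := by
      intro n j hnj
      ext x
      simp only [Set.mem_inter_iff, Set.mem_empty_iff_false, iff_false, not_and]
      intro hxB hxW
      exact ((hWmem x j).1 hxW).2 n hnj hxB
    -- trace families
    obtain ⟨𝓣, h𝓣⟩ : ∃ 𝓣 : ℕ → Set (Set α),
        ∀ j, 𝓣 j = {T | T.Nonempty ∧ T ≠ W j ∧ ∃ n, T = B n ∩ W j} := ⟨_, fun _ => rfl⟩
    have h𝓣cnt : ∀ j, (𝓣 j).Countable := by
      intro j
      apply Set.Countable.mono _ (Set.countable_range fun n => B n ∩ W j)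
      rw [h𝓣 j]
      rintro T ⟨-, -, n, rfl⟩
      exact ⟨n, rfl⟩
    have h𝓣ne : ∀ j, ∀ T ∈ 𝓣 j, T.Nonempty := by
      intro j T hT; rw [h𝓣 j] at hT; exact hT.1
    have h𝓣prop : ∀ j, HasPropC (𝓣 j) (k + 1) (r : Cardinal.{u}) := by
      intro j 𝒯 hsub hcard
      rw [h𝓣 j] at hsub
      have hrepE : ∀ T : Set α, ∃ n : ℕ,
          T ∈ {T | T.Nonempty ∧ T ≠ W j ∧ ∃ n, T = B n ∩ W j} → T = B n ∩ W j := by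
        intro T
        by_cases hT : T ∈ {T | T.Nonempty ∧ T ≠ W j ∧ ∃ n, T = B n ∩ W j}
        · obtain ⟨n, hn⟩ := hT.2.2; exact ⟨n, fun _ => hn⟩
        · exact ⟨0, fun h => absurd h hT⟩
      choose rep hrep using hrepE
      have hrepinj : Set.InjOn (fun T => B (rep T)) ↑𝒯 := by
        intro T1 h1 T2 h2 hEq
        have e1 := hrep T1 (hsub h1); have e2 := hrep T2 (hsub h2)
        simp only at hEq
        rw [e1, e2, hEq]
      have hBjnot : B j ∉ 𝒯.image fun T => B (rep T) := by
        intro hmem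
        obtain ⟨T, hT, hTe⟩ := Finset.mem_image.mp hmem
        have hTeq := hrep T (hsub hT)
        rw [hTe] at hTeq
        have hWBj : B j ∩ W j = W j := Set.inter_eq_self_of_subset_right (hWsub j)
        exact (hsub hT).2.1 (hTeq.trans hWBj)
      have hcardℛ : (insert (B j) (𝒯.image fun T => B (rep T))).card = (k + 1) + 1 := by
        rw [Finset.card_insert_of_notMem hBjnot, Finset.card_image_of_injOn hrepinj, hcard]
      have hsubℛ : ↑(insert (B j) (𝒯.image fun T => B (rep T))) ⊆ Set.range B := by
        intro S hS
        simp only [Finset.coe_insert, Set.mem_insert_iff, Finset.coe_image,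
          Set.mem_image] at hS
        rcases hS with rfl | ⟨T, -, rfl⟩
        · exact ⟨j, rfl⟩
        · exact ⟨rep T, rfl⟩
      have hbig := hC _ hsubℛ hcardℛ
      have hsub2 : ⋂₀ (𝒯 : Set (Set α)) ⊆
          ⋂₀ ((insert (B j) (𝒯.image fun T => B (rep T)) : Finset (Set α)) : Set (Set α)) := by
        intro x hx
        obtain ⟨T0, hT0⟩ : 𝒯.Nonempty := Finset.card_pos.mp (by rw [hcard]; omega)
        intro S hS
        simp only [Finset.coe_insert, Set.mem_insert_iff, Finset.coe_image,
          Set.mem_image] at hS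
        rcases hS with rfl | ⟨T, hT, rfl⟩
        · have hxT0 : x ∈ T0 := hx T0 (Finset.mem_coe.mpr hT0)
          have hTeq := hrep T0 (hsub (Finset.mem_coe.mpr hT0))
          rw [hTeq] at hxT0
          exact hWsub j hxT0.2
        · have hxT : x ∈ T := hx T (Finset.mem_coe.mpr hT)
          have hTeq := hrep T (hsub (Finset.mem_coe.mpr hT))
          rw [hTeq] at hxT
          exact hxT.1
      exact (Cardinal.mk_le_mk_of_subset hsub2).trans_lt hbig
    -- recursive embeddings on trace families
    have hrec : ∀ j : ℕ, ∃ f : α → Ordinal.{u}, MyGood (𝓣 j) f :=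
      fun j => ih (𝓣 j) (h𝓣cnt j) (h𝓣ne j) (h𝓣prop j)
    choose g hg using hrec
    obtain ⟨U, hU⟩ : ∃ U : ℕ → Set α, ∀ j, U j = ⋃₀ 𝓣 j := ⟨_, fun _ => rfl⟩
    have hUW : ∀ j, U j ⊆ W j := by
      intro j x hx
      rw [hU j] at hx
      obtain ⟨T, hT, hxT⟩ := hx
      rw [h𝓣 j] at hT
      obtain ⟨n, rfl⟩ := hT.2.2
      exact hxT.2
    -- block top points
    obtain ⟨p, hpdef⟩ : ∃ p : ℕ → α, ∀ j,
        p j = if h : (W j \ U j).Nonempty then h.choose else (hAne 0).choose :=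
      ⟨_, fun _ => rfl⟩
    have hpmem : ∀ j, (W j \ U j).Nonempty → p j ∈ W j \ U j := by
      intro j h
      rw [hpdef j, dif_pos h]
      exact h.choose_spec
    obtain ⟨c, hc⟩ : ∃ c : ℕ → Ordinal.{u},
        ∀ j, c j = (⨆ x : (U j : Set α), g j x) + 1 :=
      ⟨fun j => (⨆ x : (U j : Set α), g j x) + 1, fun _ => rfl⟩
    have hgltc : ∀ j, ∀ x ∈ U j, g j x < c j := by
      intro j x hx
      have h1 : g j x ≤ ⨆ y : (U j : Set α), g j y :=
        le_ciSup Ordinal.bddAbove_of_small (⟨x, hx⟩ : (U j : Set α))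
      rw [hc j, Ordinal.add_one_eq_succ]
      exact h1.trans_lt (Order.lt_succ _)
    -- block embeddings
    obtain ⟨f, hfdef⟩ : ∃ f : ℕ → α → Ordinal.{u}, ∀ j x,
        f j x = if x ∈ U j then g j x else if x = p j then c j + τ else c j + e x :=
      ⟨_, fun _ _ => rfl⟩
    have hfU : ∀ j, ∀ x ∈ U j, f j x = g j x := by
      intro j x hx; rw [hfdef, if_pos hx]
    have hfltc : ∀ j, ∀ x ∈ U j, f j x < c j := by
      intro j x hx; rw [hfU j x hx]; exact hgltc j x hx
    have hfcle : ∀ j x, x ∉ U j → c j ≤ f j x := by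
      intro j x hx
      rw [hfdef, if_neg hx]
      by_cases hxp : x = p j
      · rw [if_pos hxp]; exact le_self_add
      · rw [if_neg hxp]; exact le_self_add
    have hfle_top : ∀ j x, f j x ≤ c j + τ := by
      intro j x
      rw [hfdef]
      by_cases h1 : x ∈ U j
      · rw [if_pos h1]
        exact ((hgltc j x h1).le.trans (le_self_add))
      · rw [if_neg h1]
        by_cases h2 : x = p j
        · rw [if_pos h2]
        · rw [if_neg h2]; exact add_le_add_right (heτ x).le _
    have hfp : ∀ j, p j ∉ U j → f j (p j) = c j + τ := by
      intro j hpU; rw [hfdef, if_neg hpU, if_pos rfl]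
    have hbInj : ∀ j, Set.InjOn (f j) (W j) := by
      intro j x hx y hy hxy
      by_cases hxU : x ∈ U j <;> by_cases hyU : y ∈ U j
      · refine (hg j).1 ?_ ?_ ?_
        · rw [← hU j]; exact hxU
        · rw [← hU j]; exact hyU
        · rwa [hfU j x hxU, hfU j y hyU] at hxy
      · exact absurd hxy ((hfltc j x hxU).trans_le (hfcle j y hyU)).ne
      · exact absurd hxy.symm ((hfltc j y hyU).trans_le (hfcle j x hxU)).ne
      · rw [hfdef, hfdef, if_neg hxU, if_neg hyU] at hxy
        by_cases hxp : x = p j <;> by_cases hyp : y = p j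
        · rw [hxp, hyp]
        · rw [if_pos hxp, if_neg hyp] at hxy
          exact absurd (add_left_cancel_iff.mp hxy).symm (heτ y).ne
        · rw [if_neg hxp, if_pos hyp] at hxy
          exact absurd (add_left_cancel_iff.mp hxy) (heτ x).ne
        · rw [if_neg hxp, if_neg hyp] at hxy
          exact he (add_left_cancel_iff.mp hxy)
    have hbMax : ∀ j n, (B n ∩ W j).Nonempty →
        ∃ m ∈ B n ∩ W j, ∀ x ∈ B n ∩ W j, f j x ≤ f j m := by
      intro j n hTn
      by_cases hT : B n ∩ W j = W j
      · by_cases hWU : (W j \ U j).Nonempty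
        · have hpj := hpmem j hWU
          refine ⟨p j, by rw [hT]; exact hpj.1, ?_⟩
          intro x hx
          rw [hfp j hpj.2]
          exact hfle_top j x
        · have hWsubU : W j ⊆ U j := fun x hx => by
            by_contra h
            exact hWU ⟨x, hx, h⟩
          have hUne : (⋃₀ 𝓣 j).Nonempty := by
            obtain ⟨x, hx⟩ := hTn
            refine ⟨x, ?_⟩
            rw [← hU j]
            exact hWsubU hx.2
          obtain ⟨m, hm, hmax⟩ := (hg j).2.2 hUne
          have hmU : m ∈ U j := by rw [hU j]; exact hm
          refine ⟨m, by rw [hT]; exact hUW j hmU, ?_⟩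
          intro x hx
          have hxU : x ∈ U j := hWsubU hx.2
          rw [hfU j x hxU, hfU j m hmU]
          refine hmax x ?_
          rw [← hU j]; exact hxU
      · have hTmem : B n ∩ W j ∈ 𝓣 j := by
          rw [h𝓣 j]; exact ⟨hTn, hT, n, rfl⟩
        obtain ⟨m, hm, hmax⟩ := (hg j).2.1 _ hTmem
        have hsubU : B n ∩ W j ⊆ U j := by
          rw [hU j]; exact Set.subset_sUnion_of_mem hTmem
        exact ⟨m, hm, fun x hx => by
          rw [hfU j x (hsubU hx), hfU j m (hsubU hm)]; exact hmax x hx⟩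
    -- offsets
    obtain ⟨b, hb⟩ : ∃ b : ℕ → Ordinal.{u},
        ∀ i, b i = if i = 0 then 0 else (⨆ x : (W i : Set α), f i x) + 1 := ⟨_, fun _ => rfl⟩
    obtain ⟨uu, huu0, huusucc⟩ : ∃ uu : ℕ → Ordinal.{u},
        uu 0 = 0 ∧ ∀ m, uu (m + 1) = uu m + b m :=
      ⟨fun m => Nat.rec 0 (fun m ih => ih + b m) m, rfl, fun _ => rfl⟩
    have huumono : Monotone uu := by
      apply monotone_nat_of_le_succ
      intro m; rw [huusucc]; exact le_self_add
    have hfb : ∀ i, i ≠ 0 → ∀ x ∈ W i, f i x < b i := by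
      intro i hi x hx
      rw [hb, if_neg hi]
      have h1 : f i x ≤ ⨆ y : (W i : Set α), f i y :=
        le_ciSup Ordinal.bddAbove_of_small (⟨x, hx⟩ : (W i : Set α))
      rw [Ordinal.add_one_eq_succ]
      exact h1.trans_lt (Order.lt_succ _)
    obtain ⟨L, hLdef⟩ : ∃ L : Ordinal.{u}, L = ⨆ m, uu m := ⟨⨆ m, uu m, rfl⟩
    have hL : ∀ m, uu m ≤ L := fun m => by
      rw [hLdef]; exact le_ciSup Ordinal.bddAbove_of_small m
    obtain ⟨t, ht⟩ : ∃ t : ℕ → Ordinal.{u}, ∀ j, t j = if j = 0 then L else uu j :=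
      ⟨_, fun _ => rfl⟩
    obtain ⟨F, hF⟩ : ∃ F : α → Ordinal.{u}, ∀ x, F x = t (idx x) + f (idx x) x :=
      ⟨_, fun _ => rfl⟩
    have hmemV : ∀ x, x ∈ ⋃₀ Set.range B → ∃ n, x ∈ B n := by
      intro x hx
      obtain ⟨S, ⟨n, rfl⟩, hxS⟩ := hx
      exact ⟨n, hxS⟩
    have hcross : ∀ x y : α, idx x ≠ 0 → (idx y = 0 ∨ idx x < idx y) →
        x ∈ W (idx x) → F x < F y := by
      intro x y hx0 hj hxW
      have h1 : F x < uu (idx x + 1) := by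
        rw [hF, ht, if_neg hx0, huusucc]
        exact (add_lt_add_iff_left _).mpr (hfb _ hx0 x hxW)
      have h2 : uu (idx x + 1) ≤ t (idx y) := by
        rcases hj with h | h
        · rw [ht, if_pos h]; exact hL _
        · have hy0 : idx y ≠ 0 := by omega
          rw [ht, if_neg hy0]; exact huumono h
      calc F x < uu (idx x + 1) := h1
        _ ≤ t (idx y) := h2
        _ ≤ t (idx y) + f (idx y) y := le_self_add
        _ = F y := (hF y).symm
    refine ⟨F, ?_, ?_, ?_⟩
    · -- injectivity
      intro x hx y hy hxy
      have hxW := hmemW x (hmemV x hx)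
      have hyW := hmemW y (hmemV y hy)
      by_cases hij : idx x = idx y
      · rw [hF, hF, hij] at hxy
        have hfxy := add_left_cancel_iff.mp hxy
        exact hbInj (idx y) (hij ▸ hxW) hyW hfxy
      · have htot : (idx x ≠ 0 ∧ (idx y = 0 ∨ idx x < idx y)) ∨
            (idx y ≠ 0 ∧ (idx x = 0 ∨ idx y < idx x)) := by omega
        rcases htot with ⟨h1, h2⟩ | ⟨h1, h2⟩
        · exact absurd hxy (hcross x y h1 h2 hxW).ne
        · exact absurd hxy.symm (hcross y x h1 h2 hyW).ne
    · -- edge maxima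
      rintro A ⟨n, rfl⟩
      have hsub : ∀ x ∈ B n, x ∈ ⋃₀ Set.range B := fun x hx => ⟨B n, ⟨n, rfl⟩, hx⟩
      have hidxle : ∀ j, (B n ∩ W j).Nonempty → j ≤ n := by
        intro j hj
        by_contra hlt
        rw [hdisj n j (by omega)] at hj
        exact Set.not_nonempty_empty hj
      by_cases h0 : (B n ∩ W 0).Nonempty
      · obtain ⟨m, hm, hmax⟩ := hbMax 0 n h0
        have hmidx : idx m = 0 := hidxW m 0 hm.2
        refine ⟨m, hm.1, ?_⟩
        intro x hx
        have hxW := hmemW x ⟨n, hx⟩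
        by_cases hix : idx x = 0
        · rw [hF x, hF m, hmidx, hix]
          exact add_le_add_right (hmax x ⟨hx, hix ▸ hxW⟩) _
        · exact (hcross x m hix (Or.inl hmidx) hxW).le
      · obtain ⟨j0, hj0⟩ : ∃ j, (B n ∩ W j).Nonempty := by
          obtain ⟨a, ha⟩ := hAne n
          exact ⟨idx a, a, ha, hmemW a ⟨n, ha⟩⟩
        have hjs := Nat.findGreatest_spec (P := fun j => (B n ∩ W j).Nonempty)
          (hidxle j0 hj0) hj0
        obtain ⟨m, hm, hmax⟩ := hbMax (Nat.findGreatest (fun j => (B n ∩ W j).Nonempty) n) n hjs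
        have hmidx : idx m = Nat.findGreatest (fun j => (B n ∩ W j).Nonempty) n :=
          hidxW m _ hm.2
        refine ⟨m, hm.1, ?_⟩
        intro x hx
        have hxW := hmemW x ⟨n, hx⟩
        have hxP : (B n ∩ W (idx x)).Nonempty := ⟨x, hx, hxW⟩
        have hix0 : idx x ≠ 0 := fun h => h0 (h ▸ hxP)
        by_cases hieq : idx x = Nat.findGreatest (fun j => (B n ∩ W j).Nonempty) n
        · rw [hF x, hF m, hmidx, hieq]
          exact add_le_add_right (hmax x ⟨hx, hieq ▸ hxW⟩) _
        · have hlt : idx x < Nat.findGreatest (fun j => (B n ∩ W j).Nonempty) n :=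
            lt_of_le_of_ne (Nat.le_findGreatest (hidxle _ hxP) hxP) hieq
          refine (hcross x m hix0 (Or.inr ?_) hxW).le
          rw [hmidx]; exact hlt
    · -- global maximum
      intro hVne
      have h00 : (B 0 ∩ W 0).Nonempty := by
        rw [hW0, Set.inter_self]; exact hAne 0
      obtain ⟨m, hm, hmax⟩ := hbMax 0 0 h00
      have hmidx : idx m = 0 := hidxW m 0 hm.2
      refine ⟨m, ⟨B 0, ⟨0, rfl⟩, hm.1⟩, ?_⟩
      intro x hx
      have hxW := hmemW x (hmemV x hx)
      by_cases hix : idx x = 0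
      · have hxBW : x ∈ B 0 ∩ W 0 := by
          refine ⟨?_, hix ▸ hxW⟩
          rw [← hW0]; exact hix ▸ hxW
        rw [hF x, hF m, hmidx, hix]
        exact add_le_add_right (hmax x hxBW) _
      · exact (hcross x m hix (Or.inl hmidx) hxW).le

end Aux

theorem maxWO_of_countable' {α : Type u}
    (𝓐 : Set (Set α)) (hcnt : 𝓐.Countable)
    (hne : ∀ A ∈ 𝓐, A.Nonempty)
    (k r : ℕ) (hC : HasPropC 𝓐 k r) :
    (∃ rr : (⋃₀ 𝓐 : Set α) → (⋃₀ 𝓐 : Set α) → Prop, IsWellOrder _ rr ∧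
      ∀ E ∈ 𝓐, ∃ m : (⋃₀ 𝓐 : Set α), (m : α) ∈ E ∧
        ∀ x : (⋃₀ 𝓐 : Set α), (x : α) ∈ E → ¬ rr m x) := by
  classical
  have hC' : ∃ k', HasPropC 𝓐 (k' + 1) (r : Cardinal.{u}) := by
    cases k with
    | zero =>
      refine ⟨0, ?_⟩
      intro 𝓔' hsub hcard
      obtain ⟨A, rfl⟩ : ∃ A, 𝓔' = {A} := Finset.card_eq_one.mp hcard
      have h0 := hC ∅ (by simp) (by simp)
      simp only [Finset.coe_empty, Set.sInter_empty] at h0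
      simp only [Finset.coe_singleton, Set.sInter_singleton]
      exact (Cardinal.mk_le_mk_of_subset (Set.subset_univ A)).trans_lt h0
    | succ j => exact ⟨j, hC⟩
  obtain ⟨k', hC'⟩ := hC'
  obtain ⟨f, hinj, hedge, -⟩ := exists_myGood r k' 𝓐 hcnt hne hC'
  refine ⟨fun a b => f ↑a < f ↑b, ?_, ?_⟩
  · exact
      { trichotomous := fun a b hab hba =>
          Subtype.ext (hinj a.2 b.2 (le_antisymm (not_lt.mp hba) (not_lt.mp hab)))
        toIsWellFounded := ⟨by
          have h := InvImage.wf (fun a : (⋃₀ 𝓐 : Set α) => f ↑a) Ordinal.lt_wf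
          unfold InvImage at h
          exact h⟩ }
  · intro E hE
    obtain ⟨m, hmE, hmax⟩ := hedge E hE
    exact ⟨⟨m, E, hE, hmE⟩, hmE, fun x hx => not_lt.mpr (hmax ↑x hx)⟩

/-- Every countable hypergraph possessing property C(k,r) for some `k, r ∈ ω`
has a maximizing well-ordering. -/
theorem maxWO_of_countable {α : Type u}
    (𝓐 : Set (Set α)) (hcnt : 𝓐.Countable)
    (hne : ∀ A ∈ 𝓐, A.Nonempty)
    (k r : ℕ) (hC : HasPropC 𝓐 k r) :
    HasMaxWO 𝓐 :=
  maxWO_of_countable' 𝓐 hcnt hne k r hC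
end
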